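/- arXiv:1106.5912 — 2 statements merged into one kernel-verified Lean document; each statement's English description precedes it below -/
import Mathlib

section
/- Let σ be a one-parameter group of automorphisms of a C*-algebra A, β ≠ 0 a real number, and φ a state on A satisfying the KMS condition φ(ab) = φ(b σ_{iβ}(a)) for all a, b in a dense σ-invariant *-subalgebra of analytic elements. Then φ is σ-invariant: φ(σ_t(a)) = φ(a) for all a ∈ A and t ∈ ℝ. -/
open Filter Complex Set Bornology Topology

/-- Identity theorem: two entire functions agreeing on the real line are equal. -/
private lemma entire_eq_of_real_eq {E : Type*} [NormedAddCommGroup E] [NormedSpace ℂ E]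
    [CompleteSpace E] {f g : ℂ → E} (hf : Differentiable ℂ f) (hg : Differentiable ℂ g)
    (h : ∀ t : ℝ, f t = g t) : f = g := by
  apply AnalyticOnNhd.eq_of_frequently_eq (analyticOnNhd_univ_iff_differentiable.mpr hf)
    (analyticOnNhd_univ_iff_differentiable.mpr hg) (z₀ := (0 : ℂ))
  have h0 : Tendsto (fun n : ℕ => (((n : ℝ) + 1)⁻¹ : ℂ)) atTop (𝓝 (0 : ℂ)) := by
    have : Tendsto (fun n : ℕ => ((n : ℝ) + 1)⁻¹) atTop (𝓝 (0 : ℝ)) :=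
      tendsto_one_div_add_atTop_nhds_zero_nat.congr (by intro n; rw [one_div])
    have h0' := (Complex.continuous_ofReal.tendsto 0).comp this
    simp only [Function.comp_def, Complex.ofReal_zero] at h0'
    exact h0'.congr fun n => by push_cast; ring
  have ht : Tendsto (fun n : ℕ => (((n : ℝ) + 1)⁻¹ : ℂ)) atTop (𝓝[≠] (0 : ℂ)) := by
    apply tendsto_nhdsWithin_of_tendsto_nhds_of_eventually_within _ h0
    filter_upwards with n
    simp only [mem_compl_iff, mem_singleton_iff]
    exact_mod_cast inv_ne_zero (by positivity : ((n : ℝ) + 1) ≠ 0)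
  exact ht.frequently (Eventually.of_forall fun n => by exact_mod_cast h (((n : ℝ) + 1)⁻¹)).frequently

/-- If `σ` is a strongly continuous one-parameter automorphism group of a
unital C*-algebra `A`, `β ≠ 0`, and a state `φ` satisfies the KMS condition
`φ(ab) = φ(b σ_{iβ}(a))` on a dense `σ`-invariant *-subalgebra `B` of analytic elements
(whose analytic extension is `F`), then `φ` is `σ`-invariant. -/
theorem kms_state_is_invariant
    (A : Type*) [NormedRing A] [StarRing A] [CStarRing A] [CompleteSpace A]
    [NormedAlgebra ℂ A] [StarModule ℂ A]
    (σ : ℝ → A ≃⋆ₐ[ℂ] A)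
    (hσ0 : σ 0 = StarAlgEquiv.refl ℂ A)
    (hσadd : ∀ s t : ℝ, ∀ x : A, σ (s + t) x = σ s (σ t x))
    (hσcont : ∀ x : A, Continuous fun t : ℝ => σ t x)
    (β : ℝ) (hβ : β ≠ 0)
    (φ : A →L[ℂ] ℂ)
    (hpos : ∀ x : A, 0 ≤ (φ (star x * x)).re ∧ (φ (star x * x)).im = 0)
    (hone : φ 1 = 1)
    (B : StarSubalgebra ℂ A) (hdense : Dense (B : Set A))
    (hBinv : ∀ t : ℝ, ∀ b ∈ B, σ t b ∈ B)
    (F : A → ℂ → A)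
    (hFanalytic : ∀ b ∈ B, Differentiable ℂ (F b))
    (hFext : ∀ b ∈ B, ∀ t : ℝ, F b (t : ℂ) = σ t b)
    (hKMS : ∀ a ∈ B, ∀ b ∈ B, φ (a * b) = φ (b * F a (Complex.I * β))) :
    ∀ (x : A) (t : ℝ), φ (σ t x) = φ x := by
  letI : CStarAlgebra A :=
    { ‹NormedRing A›, ‹StarRing A›, ‹CStarRing A›, ‹CompleteSpace A›,
      ‹NormedAlgebra ℂ A›, ‹StarModule ℂ A› with }
  have hiso : ∀ t : ℝ, Isometry (σ t) := fun t => StarAlgEquiv.isometry (σ t)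
  let L : ℝ → A →L[ℂ] A := fun t =>
    { toFun := σ t
      map_add' := map_add _
      map_smul' := map_smul _
      cont := (hiso t).continuous }
  have hB : ∀ b ∈ B, ∀ t : ℝ, φ (σ t b) = φ b := by
    intro b hb t
    -- shift identity: F b (z + s) = σ s (F b z)
    have hshift : ∀ s : ℝ, ∀ z : ℂ, F b (z + s) = σ s (F b z) := by
      intro s
      have := entire_eq_of_real_eq (f := fun z => F b (z + s)) (g := fun z => L s (F b z))
        ((hFanalytic b hb).comp (differentiable_id.add_const _))
        ((L s).differentiable.comp (hFanalytic b hb))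
        (by
          intro u
          show F b ((u : ℂ) + s) = σ s (F b u)
          have h1 : ((u : ℂ) + s) = ((u + s : ℝ) : ℂ) := by push_cast; ring
          rw [h1, hFext b hb (u + s), hFext b hb u]
          rw [show u + s = s + u from add_comm u s, hσadd s u b])
      exact fun z => congrFun this z
    -- F of σ s b is the shift of F b
    have hFσ : ∀ s : ℝ, F (σ s b) = fun z => F b (z + s) := by
      intro s
      exact entire_eq_of_real_eq (hFanalytic _ (hBinv s b hb))
        ((hFanalytic b hb).comp (differentiable_id.add_const _))
        (by
          intro u
          show F (σ s b) u = F b ((u : ℂ) + s)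
          rw [hFext _ (hBinv s b hb) u]
          have h1 : ((u : ℂ) + s) = ((u + s : ℝ) : ℂ) := by push_cast; ring
          rw [h1, hFext b hb (u + s), hσadd u s b])
    set f : ℂ → ℂ := fun z => φ (F b z) with hf_def
    have hf_diff : Differentiable ℂ f := φ.differentiable.comp (hFanalytic b hb)
    -- periodicity on the reals from KMS
    have hper_real : ∀ s : ℝ, f (s + Complex.I * β) = f s := by
      intro s
      have h1 := hKMS (σ s b) (hBinv s b hb) 1 (one_mem B)
      simp only [mul_one, one_mul, hFσ s] at h1
      show φ (F b ((s : ℂ) + Complex.I * β)) = φ (F b s)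
      rw [hFext b hb s, show (s : ℂ) + Complex.I * β = Complex.I * β + s from by ring, ← h1]
    -- periodicity everywhere by the identity theorem
    have hper : Function.Periodic f (Complex.I * β) := by
      have := entire_eq_of_real_eq (f := fun z => f (z + Complex.I * β)) (g := f)
        (hf_diff.comp (differentiable_id.add_const _)) hf_diff hper_real
      exact fun z => congrFun this z
    -- bound on the fundamental strip
    obtain ⟨C, hC⟩ : ∃ C, ∀ y ∈ Icc (-|β|) |β|, ‖F b (Complex.I * y)‖ ≤ C := by
      apply isCompact_Icc.exists_bound_of_continuousOn
      exact ((hFanalytic b hb).continuous.comp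
        (by continuity : Continuous fun y : ℝ => Complex.I * (y : ℂ))).continuousOn
    -- global bound
    have hbound : ∀ z : ℂ, ‖f z‖ ≤ ‖φ‖ * C := by
      intro z
      set n : ℤ := ⌊z.im / β⌋ with hn
      set z' : ℂ := z - n * (Complex.I * β) with hz'
      have hzz' : f z' = f z := by
        have := hper.sub_int_mul_eq (x := z) n
        simpa [hz', mul_comm, mul_left_comm] using this
      have him : |z'.im| ≤ |β| := by
        have him' : z'.im = z.im - n * β := by
          simp [hz', Complex.sub_im, Complex.mul_im, Complex.mul_re]
        have h1 : (n : ℝ) ≤ z.im / β := Int.floor_le _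
        have h2 : z.im / β < n + 1 := Int.lt_floor_add_one _
        rw [him', abs_le]
        rcases hβ.lt_or_gt with h | h
        · have h1' : z.im ≤ n * β := by
            rw [le_div_iff_of_neg h] at h1; linarith
          have h2' : (n + 1 : ℝ) * β < z.im := by
            rw [div_lt_iff_of_neg h] at h2; linarith
          constructor <;> [nlinarith [neg_abs_le β, le_abs_self β];
            nlinarith [neg_abs_le β, le_abs_self β]]
        · have h1' : (n : ℝ) * β ≤ z.im := by
            rw [le_div_iff₀ h] at h1; linarith
          have h2' : z.im < (n + 1 : ℝ) * β := by
            rw [div_lt_iff₀ h] at h2; linarith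
          constructor <;> [nlinarith [neg_abs_le β, le_abs_self β];
            nlinarith [neg_abs_le β, le_abs_self β]]
      have hsplit : F b z' = σ z'.re (F b (Complex.I * z'.im)) := by
        have h3 : Complex.I * (z'.im : ℂ) + (z'.re : ℂ) = z' := by
          apply Complex.ext <;> simp
        calc F b z' = F b (Complex.I * z'.im + z'.re) := congrArg (F b) h3.symm
          _ = σ z'.re (F b (Complex.I * z'.im)) := hshift z'.re _
      calc ‖f z‖ = ‖φ (F b z')‖ := by rw [← hzz']
        _ ≤ ‖φ‖ * ‖F b z'‖ := φ.le_opNorm _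
        _ = ‖φ‖ * ‖F b (Complex.I * z'.im)‖ := by
            rw [hsplit, StarAlgEquiv.norm_map (σ z'.re)]
        _ ≤ ‖φ‖ * C := by
            refine mul_le_mul_of_nonneg_left (hC z'.im (abs_le.mp him)) (norm_nonneg _)
    have hbdd : IsBounded (Set.range f) := by
      rw [isBounded_iff_forall_norm_le]
      exact ⟨‖φ‖ * C, by rintro x ⟨z, rfl⟩; exact hbound z⟩
    -- Liouville
    have hL := hf_diff.apply_eq_apply_of_bounded hbdd (t : ℂ) 0
    have hf0 : f 0 = φ b := by
      have : ((0 : ℝ) : ℂ) = 0 := by norm_num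
      simp only [hf_def]
      rw [← this, hFext b hb 0, hσ0]
      rfl
    have hft : f t = φ (σ t b) := by
      simp only [hf_def, hFext b hb t]
    rw [← hft, hL, hf0]
  intro x t
  have heq : (fun x : A => φ (σ t x)) = fun x : A => φ x := by
    apply Continuous.ext_on hdense
    · exact φ.continuous.comp (hiso t).continuous
    · exact φ.continuous
    · exact fun b hb => hB b hb t
  exact congrFun heq x
end

section
/- Let Γ be a countable discrete abelian group and H ⊆ Γ a subgroup. A probability measure λ on the Pontryagin dual Γ̂ satisfies ∫_{Γ̂} χ(g) dλ(χ) = 0 for all g ∈ Γ \ H if and only if λ is invariant under translation by every element of the annihilator H^⊥ = {ω ∈ Γ̂ : ω(h) = 1 for all h ∈ H}. -/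
open MeasureTheory

section Uniq
variable {Γ : Type*} [CommGroup Γ] [Countable Γ] [TopologicalSpace Γ] [DiscreteTopology Γ]
    [IsTopologicalGroup Γ]

noncomputable instance : ContinuousEvalConst (PontryaginDual Γ) Γ Circle :=
  inferInstanceAs (ContinuousEvalConst (ContinuousMonoidHom Γ Circle) Γ Circle)

/-- evaluation character as a continuous map -/
noncomputable def evalChar (g : Γ) : C(PontryaginDual Γ, ℂ) :=
  ⟨fun χ => (χ g : ℂ), continuous_subtype_val.comp (continuous_eval_const g)⟩

noncomputable def evalCharHom : Γ →* C(PontryaginDual Γ, ℂ) where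
  toFun := evalChar
  map_one' := by ext χ; simp [evalChar]
  map_mul' g g' := by ext χ; simp [evalChar]

lemma star_evalChar (g : Γ) : star (evalChar (Γ := Γ) g) = evalChar g⁻¹ := by
  ext χ
  rw [ContinuousMap.star_apply]
  show star ((χ g : ℂ)) = ((χ g⁻¹ : Circle) : ℂ)
  rw [map_inv, Circle.coe_inv_eq_conj]
  rfl

theorem equicont' {ι X Y : Type*} [TopologicalSpace X] [DiscreteTopology X] [UniformSpace Y]
    (F : ι → X → Y) : Equicontinuous F := by
  intro x U hU
  rw [nhds_discrete]
  exact Filter.eventually_pure.2 fun i => refl_mem_uniformity hU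

omit [Countable Γ] [IsTopologicalGroup Γ] in
theorem compactSpace_pd' : CompactSpace (PontryaginDual Γ) := by
  have hemb := ContinuousMonoidHom.isClosedEmbedding_toContinuousMap Γ Circle
  set S : Set C(Γ, Circle) :=
    Set.range (ContinuousMonoidHom.toContinuousMap : PontryaginDual Γ → C(Γ, Circle)) with hS
  have hS1 : IsCompact (ContinuousMap.toFun '' S) := by
    have hcl : IsClosed (ContinuousMap.toFun '' S) := by
      have : ContinuousMap.toFun '' S =
          {f : Γ → Circle | f 1 = 1 ∧ ∀ x y, f (x * y) = f x * f y} := by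
        ext f
        constructor
        · rintro ⟨g, ⟨χ, rfl⟩, rfl⟩
          exact ⟨map_one χ, map_mul χ⟩
        · rintro ⟨h1, hmul⟩
          refine ⟨⟨f, continuous_of_discreteTopology⟩,
            ⟨⟨⟨⟨f, h1⟩, hmul⟩, continuous_of_discreteTopology⟩, rfl⟩, rfl⟩
      rw [this]
      simp only [Set.setOf_and, Set.setOf_forall]
      refine IsClosed.inter (isClosed_singleton.preimage (continuous_apply 1)) <|
        isClosed_iInter fun x => isClosed_iInter fun y => ?_
      exact isClosed_eq (continuous_apply (x * y))
        ((continuous_apply x).mul (continuous_apply y))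
    exact hcl.isCompact
  have hSc : IsCompact S := ArzelaAscoli.isCompact_of_equicontinuous S hS1 (equicont' _)
  rw [← isCompact_univ_iff]
  have : (Set.univ : Set (PontryaginDual Γ)) = ContinuousMonoidHom.toContinuousMap ⁻¹' S := by
    ext χ; simp [hS]; exact Set.mem_univ χ
  rw [this]
  exact hemb.isCompact_preimage hSc

variable [MeasurableSpace (PontryaginDual Γ)] [BorelSpace (PontryaginDual Γ)]

theorem measure_eq_of_fourier (μ ν : Measure (PontryaginDual Γ)) [IsProbabilityMeasure μ]
    [IsProbabilityMeasure ν]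
    (h : ∀ g : Γ, ∫ χ : PontryaginDual Γ, (χ g : ℂ) ∂μ = ∫ χ : PontryaginDual Γ, (χ g : ℂ) ∂ν) :
    μ = ν := by
  haveI : CompactSpace (PontryaginDual Γ) := compactSpace_pd'
  haveI : TopologicalSpace.PseudoMetrizableSpace (PontryaginDual Γ) :=
    (ContinuousMonoidHom.isInducing_toContinuousMap Γ Circle).pseudoMetrizableSpace
  -- integrability of continuous functions
  have hint : ∀ (m : Measure (PontryaginDual Γ)) [IsProbabilityMeasure m]
      (f : PontryaginDual Γ → ℂ), Continuous f → Integrable f m := by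
    intro m _ f hf
    obtain ⟨C, hC⟩ := (isCompact_range (hf.norm)).bddAbove
    refine Integrable.mono' (integrable_const C) hf.aestronglyMeasurable ?_
    exact Filter.Eventually.of_forall fun x => hC ⟨x, rfl⟩
  -- continuity of f ↦ ∫ f
  have hTc : ∀ (m : Measure (PontryaginDual Γ)) [IsProbabilityMeasure m],
      Continuous fun f : C(PontryaginDual Γ, ℂ) => ∫ x, f x ∂m := by
    intro m _
    refine LipschitzWith.continuous (K := 1) (LipschitzWith.of_dist_le_mul fun f g => ?_)
    rw [dist_eq_norm, dist_eq_norm, ← integral_sub (hint m f f.continuous) (hint m g g.continuous)]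
    have hb : ∀ x : PontryaginDual Γ, ‖f x - g x‖ ≤ ‖f - g‖ := by
      intro x
      calc ‖f x - g x‖ = ‖(f - g) x‖ := by simp
        _ ≤ ‖f - g‖ := ContinuousMap.norm_coe_le_norm _ x
    calc ‖∫ x, (f x - g x) ∂m‖ ≤ ‖f - g‖ * (m Set.univ).toReal :=
          norm_integral_le_of_norm_le_const (Filter.Eventually.of_forall hb)
      _ = 1 * ‖f - g‖ := by simp [measure_univ, one_mul, mul_comm]
  -- the set of functions with equal integrals is closed
  set E : Set C(PontryaginDual Γ, ℂ) := {f | ∫ x, f x ∂μ = ∫ x, f x ∂ν} with hE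
  have hEclosed : IsClosed E := isClosed_eq (hTc μ) (hTc ν)
  -- the submonoid of characters
  set M : Submonoid C(PontryaginDual Γ, ℂ) := MonoidHom.mrange (evalCharHom (Γ := Γ)) with hM
  have hME : (M : Set C(PontryaginDual Γ, ℂ)) ⊆ E := by
    rintro f ⟨g, rfl⟩
    exact h g
  -- span of M is contained in E
  have hspanE : (Submodule.span ℂ (M : Set C(PontryaginDual Γ, ℂ)) :
      Set C(PontryaginDual Γ, ℂ)) ⊆ E := by
    intro f hf
    induction hf using Submodule.span_induction with
    | mem f hf => exact hME hf
    | zero => simp [hE]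
    | add f g _ _ hf hg =>
        show ∫ x, (f + g) x ∂μ = ∫ x, (f + g) x ∂ν
        simp only [ContinuousMap.add_apply]
        rw [integral_add (hint μ f f.continuous) (hint μ g g.continuous),
          integral_add (hint ν f f.continuous) (hint ν g g.continuous), hf, hg]
    | smul c f _ hf =>
        show ∫ x, (c • f) x ∂μ = ∫ x, (c • f) x ∂ν
        simp only [ContinuousMap.smul_apply]
        rw [integral_smul, integral_smul, hf]
  -- star-closedness of M
  have hstar : star (M : Set C(PontryaginDual Γ, ℂ)) ⊆ (M : Set C(PontryaginDual Γ, ℂ)) := by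
    intro f hf
    rw [Set.mem_star] at hf
    obtain ⟨g, hg⟩ := hf
    refine ⟨g⁻¹, ?_⟩
    show evalChar g⁻¹ = f
    rw [← star_evalChar]
    have : evalChar (Γ := Γ) g = star f := hg
    rw [this, star_star]
  -- the star subalgebra generated by M
  set A : StarSubalgebra ℂ C(PontryaginDual Γ, ℂ) :=
    StarAlgebra.adjoin ℂ (M : Set C(PontryaginDual Γ, ℂ)) with hA
  have hAspan : (A : Set C(PontryaginDual Γ, ℂ)) ⊆
      (Submodule.span ℂ (M : Set C(PontryaginDual Γ, ℂ)) : Set C(PontryaginDual Γ, ℂ)) := by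
    intro f hf
    have h1 : f ∈ Algebra.adjoin ℂ (M : Set C(PontryaginDual Γ, ℂ)) := by
      have : A.toSubalgebra = Algebra.adjoin ℂ (M : Set C(PontryaginDual Γ, ℂ)) := by
        rw [hA, StarAlgebra.adjoin_toSubalgebra, Set.union_eq_self_of_subset_right hstar]
      rw [← this]
      exact hf
    rw [← Submonoid.closure_eq M]
    rw [← Algebra.adjoin_eq_span]
    exact h1
  -- separates points
  have hsep : A.SeparatesPoints := by
    intro χ χ' hne
    obtain ⟨g, hg⟩ := DFunLike.ne_iff.mp hne
    refine ⟨_, ⟨evalChar g, ?_, rfl⟩, ?_⟩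
    · exact StarAlgebra.subset_adjoin ℂ _ ⟨g, rfl⟩
    · show (χ g : ℂ) ≠ (χ' g : ℂ)
      exact fun hc => hg (Subtype.coe_injective hc)
  -- Stone-Weierstrass
  have hdense : Dense (A : Set C(PontryaginDual Γ, ℂ)) := by
    have htop := ContinuousMap.starSubalgebra_topologicalClosure_eq_top_of_separatesPoints A hsep
    rw [dense_iff_closure_eq]
    have : closure (A : Set C(PontryaginDual Γ, ℂ)) = (A.topologicalClosure :
        Set C(PontryaginDual Γ, ℂ)) := rfl
    rw [this, htop]
    rfl
  -- all continuous functions are in E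
  have hallE : ∀ f : C(PontryaginDual Γ, ℂ), ∫ x, f x ∂μ = ∫ x, f x ∂ν := by
    intro f
    have : (Set.univ : Set C(PontryaginDual Γ, ℂ)) ⊆ E := by
      rw [← hdense.closure_eq]
      exact closure_minimal (fun x hx => hspanE (hAspan hx)) hEclosed
    exact this (Set.mem_univ f)
  -- conclude via lintegrals of bounded continuous nonneg functions
  refine ext_of_forall_lintegral_eq_of_IsFiniteMeasure fun f => ?_
  have hfc : Continuous fun x => ((f x : ℝ)) := NNReal.continuous_coe.comp f.continuous
  have hfC : ∀ (m : Measure (PontryaginDual Γ)) [IsProbabilityMeasure m],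
      ∫ x, ((f x : ℝ) : ℂ) ∂m = ((∫ x, (f x : ℝ) ∂m : ℝ) : ℂ) := by
    intro m _
    exact integral_ofReal
  have key := hallE ⟨fun x => ((f x : ℝ) : ℂ), Complex.continuous_ofReal.comp hfc⟩
  simp only [ContinuousMap.coe_mk] at key
  rw [hfC μ, hfC ν] at key
  have hreal : ∫ x, (f x : ℝ) ∂μ = ∫ x, (f x : ℝ) ∂ν := by exact_mod_cast key
  have hintf : ∀ (m : Measure (PontryaginDual Γ)) [IsProbabilityMeasure m],
      Integrable (fun x => (f x : ℝ)) m := by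
    intro m _
    obtain ⟨C, hC⟩ := (isCompact_range (hfc.norm)).bddAbove
    refine Integrable.mono' (integrable_const C) hfc.aestronglyMeasurable ?_
    exact Filter.Eventually.of_forall fun x => hC ⟨x, rfl⟩
  rw [lintegral_coe_eq_integral _ (hintf μ), lintegral_coe_eq_integral _ (hintf ν), hreal]

end Uniq

noncomputable def qchar : AddCircle (1:ℚ) →+ Additive Circle :=
  QuotientAddGroup.lift (AddSubgroup.zmultiples (1:ℚ))
    { toFun := fun q => Additive.ofMul (Circle.exp (2 * Real.pi * (q:ℝ)))
      map_zero' := by simp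
      map_add' := fun a b => by
        push_cast
        rw [mul_add, Circle.exp_add]
        rfl }
    (by
      intro q hq
      obtain ⟨n, rfl⟩ := hq
      show Additive.ofMul (Circle.exp _) = 0
      have : ((n • (1:ℚ) : ℚ) : ℝ) = (n : ℝ) := by push_cast; simp
      rw [this]
      rw [mul_comm (2*Real.pi) (n:ℝ), Circle.exp_int_mul_two_pi]
      rfl)

theorem qchar_eq_zero {x : AddCircle (1:ℚ)} (h : qchar x = 0) : x = 0 := by
  induction x using QuotientAddGroup.induction_on with
  | H q =>
    have : Circle.exp (2 * Real.pi * (q:ℝ)) = 1 := h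
    rw [Circle.exp_eq_one] at this
    obtain ⟨n, hn⟩ := this
    have hpi : (2 * Real.pi) ≠ 0 := by positivity
    have hq : (q:ℝ) = (n:ℝ) :=
      mul_left_cancel₀ hpi (by rw [hn]; ring)
    have : q = (n:ℚ) := by exact_mod_cast hq
    rw [this, QuotientAddGroup.eq_zero_iff]
    exact ⟨n, by simp⟩

theorem exists_annihilator_char {Γ : Type*} [CommGroup Γ] [TopologicalSpace Γ]
    [DiscreteTopology Γ] [IsTopologicalGroup Γ] (H : Subgroup Γ) {g : Γ} (hg : g ∉ H) :
    ∃ ω : PontryaginDual Γ, (∀ h ∈ H, ω h = 1) ∧ ω g ≠ 1 := by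
  have ha : Additive.ofMul (QuotientGroup.mk (s := H) g) ≠ 0 := by
    rw [ne_eq, ← ofMul_one, Additive.ofMul.apply_eq_iff_eq]
    intro h
    exact hg ((QuotientGroup.eq_one_iff g).mp h)
  obtain ⟨c, hc⟩ := CharacterModule.exists_character_apply_ne_zero_of_ne_zero ha
  refine ⟨⟨⟨⟨fun x => Additive.toMul (qchar (c (Additive.ofMul (QuotientGroup.mk (s := H) x)))),
      ?_⟩, ?_⟩, continuous_of_discreteTopology⟩, ?_, ?_⟩
  · show Additive.toMul (qchar (c (Additive.ofMul (QuotientGroup.mk (1 : Γ))))) = 1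
    simp only [QuotientGroup.mk_one, ofMul_one, map_zero]
    rfl
  · intro x y
    show Additive.toMul (qchar (c (Additive.ofMul (QuotientGroup.mk (x * y))))) = _
    have : Additive.ofMul (QuotientGroup.mk (s := H) (x * y)) =
        Additive.ofMul (QuotientGroup.mk (s := H) x) +
          Additive.ofMul (QuotientGroup.mk (s := H) y) := by
      rw [QuotientGroup.mk_mul]; rfl
    rw [this, map_add, map_add]
    rfl
  · intro h hh
    show Additive.toMul (qchar (c (Additive.ofMul (QuotientGroup.mk h)))) = 1
    have : QuotientGroup.mk (s := H) h = 1 := (QuotientGroup.eq_one_iff h).mpr hh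
    rw [this]
    simp only [ofMul_one, map_zero]
    rfl
  · show Additive.toMul (qchar (c (Additive.ofMul (QuotientGroup.mk g)))) ≠ 1
    intro h
    apply hc
    have h0 : qchar (c (Additive.ofMul (QuotientGroup.mk (s := H) g))) = 0 := h
    have := qchar_eq_zero h0
    exact this

/-- For a countable discrete abelian group `Γ`, a subgroup `H`, and a
probability measure `λ` on the Pontryagin dual `Γ̂`, the Fourier coefficients of `λ`
vanish off `H` if and only if `λ` is invariant under translation by every character in
the annihilator `H^⊥ = {ω : ω|_H = 1}`. -/
theorem fourier_vanishing_iff_annihilator_invariant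
    (Γ : Type*) [CommGroup Γ] [Countable Γ] [TopologicalSpace Γ] [DiscreteTopology Γ]
    [IsTopologicalGroup Γ]
    (H : Subgroup Γ)
    [MeasurableSpace (PontryaginDual Γ)] [BorelSpace (PontryaginDual Γ)]
    (lam : Measure (PontryaginDual Γ)) [IsProbabilityMeasure lam] :
    (∀ g : Γ, g ∉ H → ∫ χ : PontryaginDual Γ, (χ g : ℂ) ∂lam = 0)
    ↔ ∀ ω : PontryaginDual Γ, (∀ h ∈ H, ω h = 1) →
        Measure.map (fun χ : PontryaginDual Γ => ω * χ) lam = lam := by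
  have hmeas : ∀ ω : PontryaginDual Γ, Measurable (fun χ : PontryaginDual Γ => ω * χ) :=
    fun ω => (continuous_mul_left ω).measurable
  have hcont : ∀ g : Γ, Continuous fun χ : PontryaginDual Γ => (χ g : ℂ) :=
    fun g => (evalChar g).continuous
  have hcoef : ∀ (ω : PontryaginDual Γ) (g : Γ),
      ∫ χ : PontryaginDual Γ, (χ g : ℂ) ∂(Measure.map (fun χ => ω * χ) lam)
        = (ω g : ℂ) * ∫ χ : PontryaginDual Γ, (χ g : ℂ) ∂lam := by
    intro ω g
    rw [integral_map (hmeas ω).aemeasurable (hcont g).aestronglyMeasurable]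
    have : ∀ χ : PontryaginDual Γ, (((ω * χ) g : Circle) : ℂ) = (ω g : ℂ) * (χ g : ℂ) := by
      intro χ
      have : (ω * χ) g = ω g * χ g := rfl
      rw [this]
      push_cast
      ring
    simp_rw [this]
    rw [integral_const_mul]
  constructor
  · intro hvan ω hω
    haveI : IsProbabilityMeasure (Measure.map (fun χ : PontryaginDual Γ => ω * χ) lam) :=
      Measure.isProbabilityMeasure_map (hmeas ω).aemeasurable
    refine measure_eq_of_fourier _ _ fun g => ?_
    rw [hcoef ω g]
    by_cases hg : g ∈ H
    · rw [hω g hg]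
      simp
    · rw [hvan g hg]
      simp
  · intro hinv g hg
    obtain ⟨ω, hω1, hω2⟩ := exists_annihilator_char H hg
    have h1 := hcoef ω g
    rw [hinv ω hω1] at h1
    have h2 : ((ω g : ℂ) - 1) * ∫ χ : PontryaginDual Γ, (χ g : ℂ) ∂lam = 0 := by
      rw [sub_mul, one_mul]
      rw [← h1]
      ring
    rcases mul_eq_zero.mp h2 with h | h
    · exfalso
      apply hω2
      have : (ω g : ℂ) = 1 := by linear_combination h
      exact Subtype.coe_injective (by simpa using this)
    · exact h
end
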